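/- Let K be a number field. Let U, V, W ∈ K[X] be polynomials such that U = V·W and such that every coefficient of U and every coefficient of V is integral over ℤ. Let v₀ = coefficient of X^0 in V. Then for every j, the element N_{K/ℚ}(v₀)·(coefficient of X^j in W) of K is integral over ℤ, where N_{K/ℚ} : K → ℚ denotes the field norm (Algebra.norm ℚ). -/

import Mathlib

open Polynomial

open NumberField in
/-- A special case of Dedekind's Prague theorem: if `U = V·W` with `U, V` having
algebraic-integer coefficients, then every product of a coefficient of `V` and a
coefficient of `W` is an algebraic integer. -/
theorem aux_prague_coeff_mul_coeff_isIntegral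
    (K : Type*) [Field K] [NumberField K]
    (U V W : Polynomial K) (hUVW : U = V * W)
    (hU : ∀ k, IsIntegral ℤ (U.coeff k))
    (hV : ∀ k, IsIntegral ℤ (V.coeff k)) (i j : ℕ) :
    IsIntegral ℤ (V.coeff i * W.coeff j) := by
  classical
  have hinj : Function.Injective (algebraMap (𝓞 K) K) := RingOfIntegers.coe_injective
  obtain ⟨U₁, hU₁⟩ := (Polynomial.mem_lifts U).mp
    ((Polynomial.lifts_iff_coeff_lifts U).mpr fun n =>
      IsIntegralClosure.isIntegral_iff (A := NumberField.RingOfIntegers K) |>.mp (hU n))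
  obtain ⟨V₁, hV₁⟩ := (Polynomial.mem_lifts V).mp
    ((Polynomial.lifts_iff_coeff_lifts V).mpr fun n =>
      IsIntegralClosure.isIntegral_iff (A := NumberField.RingOfIntegers K) |>.mp (hV n))
  obtain ⟨b, hb⟩ :=
    IsLocalization.integerNormalization_map_to_map (nonZeroDivisors (𝓞 K)) W
  set W₁ := IsLocalization.integerNormalization (nonZeroDivisors (𝓞 K)) W with hW₁def
  have hb0 : (b : 𝓞 K) ≠ 0 := nonZeroDivisors.coe_ne_zero b
  -- the equation in `(𝓞 K)[X]`
  have key : V₁ * W₁ = Polynomial.C (b : 𝓞 K) * U₁ := by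
    apply Polynomial.map_injective _ hinj
    rw [Polynomial.map_mul, Polynomial.map_mul, hV₁, hb, Polynomial.map_C, hU₁, hUVW,
      ← algebraMap_smul K (b : 𝓞 K) W, Polynomial.smul_eq_C_mul]
    ring
  -- divisibility by `b` locally at every maximal ideal, hence globally
  have hdvd : V₁.coeff i * W₁.coeff j ∈ Ideal.span {(b : 𝓞 K)} := by
    apply Ideal.mem_of_localization_maximal
    intro P hP
    haveI := hP
    haveI : P.IsPrime := hP.isPrime
    have hPbot : P ≠ ⊥ :=
      Ring.ne_bot_of_isMaximal_of_not_isField hP (NumberField.RingOfIntegers.not_isField K)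
    haveI : IsDiscreteValuationRing (Localization.AtPrime P) :=
      IsLocalization.AtPrime.isDiscreteValuationRing_of_dedekind_domain (𝓞 K) hPbot _
    letI : StrongNormalizationMonoid (Localization.AtPrime P) :=
      UniqueFactorizationMonoid.normalizationMonoid
    letI : StrongNormalizedGCDMonoid (Localization.AtPrime P) :=
      UniqueFactorizationMonoid.toStrongNormalizedGCDMonoid (Localization.AtPrime P)
    set g := algebraMap (𝓞 K) (Localization.AtPrime P) with hg
    rw [Ideal.map_span, Set.image_singleton, Ideal.mem_span_singleton]
    have hcontent : (V₁.map g).content * (W₁.map g).content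
        = normalize (g (b : 𝓞 K)) * (U₁.map g).content := by
      rw [← Polynomial.content_mul, ← Polynomial.map_mul, key, Polynomial.map_mul,
        Polynomial.map_C, Polynomial.content_C_mul]
    have h1 : g (b : 𝓞 K) ∣ (V₁.map g).content * (W₁.map g).content := by
      rw [hcontent]
      exact (dvd_normalize_iff.mpr dvd_rfl).mul_right _
    have h2 := h1.trans (mul_dvd_mul (Polynomial.content_dvd_coeff (p := V₁.map g) i)
      (Polynomial.content_dvd_coeff (p := W₁.map g) j))
    rwa [Polynomial.coeff_map, Polynomial.coeff_map, ← map_mul] at h2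
  obtain ⟨c, hc⟩ := Ideal.mem_span_singleton.mp hdvd
  -- identify `V.coeff i * W.coeff j` with the image of `c`
  have hbK : algebraMap (𝓞 K) K (b : 𝓞 K) ≠ 0 := fun h => hb0 (hinj (by rw [h, map_zero]))
  have eV : algebraMap (𝓞 K) K (V₁.coeff i) = V.coeff i := by
    rw [← hV₁, Polynomial.coeff_map]
  have eW : algebraMap (𝓞 K) K (W₁.coeff j)
      = algebraMap (𝓞 K) K (b : 𝓞 K) * W.coeff j := by
    have := congrArg (fun p => Polynomial.coeff p j) hb
    simpa [Polynomial.coeff_map, Polynomial.coeff_smul, Algebra.smul_def] using this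
  have main : V.coeff i * W.coeff j = algebraMap (𝓞 K) K c := by
    apply mul_left_cancel₀ hbK
    calc algebraMap (𝓞 K) K (b : 𝓞 K) * (V.coeff i * W.coeff j)
        = algebraMap (𝓞 K) K (V₁.coeff i)
          * (algebraMap (𝓞 K) K (b : 𝓞 K) * W.coeff j) := by rw [eV]; ring
      _ = algebraMap (𝓞 K) K (V₁.coeff i) * algebraMap (𝓞 K) K (W₁.coeff j) := by rw [eW]
      _ = algebraMap (𝓞 K) K (V₁.coeff i * W₁.coeff j) := by rw [map_mul]
      _ = algebraMap (𝓞 K) K ((b : 𝓞 K) * c) := by rw [hc]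
      _ = algebraMap (𝓞 K) K (b : 𝓞 K) * algebraMap (𝓞 K) K c := by rw [map_mul]
  rw [main]
  exact NumberField.RingOfIntegers.isIntegral_coe c

/-- Lemme 9: if `U = V·W` with `U, V` having algebraic-integer coefficients,
then the norm of the constant coefficient of `V` clears the denominators of `W`. -/
theorem norm_constantCoeff_mul_coeff_isIntegral
    (K : Type*) [Field K] [NumberField K]
    (U V W : Polynomial K) (hUVW : U = V * W)
    (hU : ∀ k, IsIntegral ℤ (U.coeff k))
    (hV : ∀ k, IsIntegral ℤ (V.coeff k)) :
    ∀ j, IsIntegral ℤ (algebraMap ℚ K (Algebra.norm ℚ (V.coeff 0)) * W.coeff j) := by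
  classical
  intro j
  by_cases hv : V.coeff 0 = 0
  · rw [hv, Algebra.norm_zero, map_zero, zero_mul]
    exact isIntegral_zero
  · have hprague := aux_prague_coeff_mul_coeff_isIntegral K U V W hUVW hU hV 0 j
    set E := AlgebraicClosure K
    have hEinj : Function.Injective (algebraMap K E) := (algebraMap K E).injective
    set ι : K →ₐ[ℚ] E := IsScalarTower.toAlgHom ℚ K E with hι
    have hnorm : algebraMap ℚ E (Algebra.norm ℚ (V.coeff 0))
        = ∏ σ : K →ₐ[ℚ] E, σ (V.coeff 0) :=
      Algebra.norm_eq_prod_embeddings ℚ E (V.coeff 0)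
    have hkey : ∀ σ : K →ₐ[ℚ] E, IsIntegral ℤ (σ (V.coeff 0)) := fun σ =>
      (hV 0).map (σ.restrictScalars ℤ)
    set y : K := algebraMap ℚ K (Algebra.norm ℚ (V.coeff 0)) * (V.coeff 0)⁻¹ with hy
    have hιv : ι (V.coeff 0) = algebraMap K E (V.coeff 0) := rfl
    have h0 : algebraMap K E (V.coeff 0) ≠ 0 := fun h => hv (hEinj (by rw [h, map_zero]))
    have hy_int : IsIntegral ℤ y := by
      rw [← isIntegral_algebraMap_iff hEinj]
      have hsplit : (∏ σ : K →ₐ[ℚ] E, σ (V.coeff 0))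
          = ι (V.coeff 0) * ∏ σ ∈ Finset.univ.erase ι, σ (V.coeff 0) :=
        (Finset.mul_prod_erase Finset.univ (fun σ => σ (V.coeff 0)) (Finset.mem_univ ι)).symm
      have heq : algebraMap K E y = ∏ σ ∈ Finset.univ.erase ι, σ (V.coeff 0) := by
        apply mul_left_cancel₀ h0
        rw [hy, map_mul, map_inv₀, ← IsScalarTower.algebraMap_apply, hnorm, hsplit, hιv]
        rw [mul_right_comm, mul_inv_cancel₀ h0, one_mul]
      rw [heq]
      exact IsIntegral.prod _ fun σ _ => hkey σ
    have hyv : y * V.coeff 0 = algebraMap ℚ K (Algebra.norm ℚ (V.coeff 0)) := by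
      rw [hy]
      field_simp
    have hre : algebraMap ℚ K (Algebra.norm ℚ (V.coeff 0)) * W.coeff j
        = y * (V.coeff 0 * W.coeff j) := by
      rw [← hyv]; ring
    rw [hre]
    exact hy_int.mul hprague
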